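/- Let G : ℝᵏ → ℝⁿ be any map, M ∈ ℝ^{m×n}, and l a nonnegative integer. Suppose there exists z ≠ z₀ in ℝᵏ with ‖M·G(z) − M·G(z₀)‖₀ ≤ 2l. Then there exists an outlier vector e ∈ ℝᵐ with ‖e‖₀ ≤ l such that, with y = M·G(z₀) + e, z₀ is not a unique minimizer of ‖M·G(z) − y‖₀, i.e., there exists z ≠ z₀ achieving ‖M·G(z) − y‖₀ ≤ ‖M·G(z₀) − y‖₀. -/
import Mathlib


/-- The ℓ₀ "norm": number of nonzero entries of a vector. -/
noncomputable def l0 {m : ℕ} (v : Fin m → ℝ) : ℕ :=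
  (Finset.univ.filter fun i => v i ≠ 0).card

/-- If some `z ≠ z₀` satisfies `‖M·G z − M·G z₀‖₀ ≤ 2l`, then there is an
`l`-sparse outlier `e` such that, with `y = M·G z₀ + e`, `z₀` is not a unique
minimizer of `‖M·G z − y‖₀`. -/
theorem l0_recovery_necessary {k n m : ℕ} (G : (Fin k → ℝ) → (Fin n → ℝ))
    (M : Matrix (Fin m) (Fin n) ℝ) (l : ℕ) (z₀ : Fin k → ℝ)
    (hbad : ∃ z : Fin k → ℝ, z ≠ z₀ ∧
      l0 (fun i => M.mulVec (G z) i - M.mulVec (G z₀) i) ≤ 2 * l) :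
    ∃ e : Fin m → ℝ, l0 e ≤ l ∧
      ∃ z : Fin k → ℝ, z ≠ z₀ ∧
        l0 (fun i => M.mulVec (G z) i - (M.mulVec (G z₀) i + e i)) ≤
          l0 (fun i => M.mulVec (G z₀) i - (M.mulVec (G z₀) i + e i)) := by
  classical
  obtain ⟨z, hz, hle⟩ := hbad
  set d : Fin m → ℝ := fun i => M.mulVec (G z) i - M.mulVec (G z₀) i with hd
  set S : Finset (Fin m) := Finset.univ.filter fun i => d i ≠ 0 with hS
  have hScard : S.card ≤ 2 * l := hle
  obtain ⟨S1, hS1sub, hS1card⟩ := Finset.exists_subset_card_eq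
    (show (S.card + 1) / 2 ≤ S.card by omega)
  refine ⟨fun i => if i ∈ S1 then d i else 0, ?_, z, hz, ?_⟩
  · have : (Finset.univ.filter fun i => (if i ∈ S1 then d i else 0) ≠ 0) ⊆ S1 := by
      intro i hi
      simp only [Finset.mem_filter] at hi
      by_contra h
      simp [h] at hi
    calc _ ≤ S1.card := Finset.card_le_card this
      _ ≤ l := by omega
  · have h1 : (Finset.univ.filter fun i =>
        M.mulVec (G z) i - (M.mulVec (G z₀) i + if i ∈ S1 then d i else 0) ≠ 0) ⊆ S \ S1 := by
      intro i hi
      simp only [Finset.mem_filter, Finset.mem_univ, true_and] at hi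
      rw [Finset.mem_sdiff]
      by_cases h1 : i ∈ S1
      · exfalso; apply hi; simp only [h1, if_pos, hd]; ring
      · refine ⟨?_, h1⟩
        by_contra h2
        have : d i = 0 := by
          by_contra h3
          exact h2 (by simp [hS, h3])
        apply hi
        simp [h1]
        have : M.mulVec (G z) i - M.mulVec (G z₀) i = 0 := this
        linarith
    have h2 : S1 ⊆ Finset.univ.filter fun i =>
        M.mulVec (G z₀) i - (M.mulVec (G z₀) i + if i ∈ S1 then d i else 0) ≠ 0 := by
      intro i hi
      have hdi : d i ≠ 0 := by
        have := hS1sub hi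
        simpa [hS] using this
      simp only [Finset.mem_filter, Finset.mem_univ, true_and, hi, if_pos]
      intro h
      apply hdi
      linarith
    calc l0 _ ≤ (S \ S1).card := Finset.card_le_card h1
      _ = S.card - S1.card := Finset.card_sdiff_of_subset hS1sub
      _ ≤ S1.card := by omega
      _ ≤ l0 _ := Finset.card_le_card h2
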